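/- For λ > 0 with r = r_λ solving sinh(2r)/(2r) = λ+1, and M*(t) = -t + sinh(2rt)/(2r), the value of θ(M*) := -log 2 + ∫_0^1 [(M*'(t)+2)log(2+M*'(t)) - M*'(t)log(M*'(t)) - 2log(t+M*(t))] dt equals β_λ := log(2e^2 r^2 tanh(r)^{-2(λ+1)}). -/

import Mathlib

open Real intervalIntegral MeasureTheory Set

noncomputable def Hfun (r : ℝ) : ℝ → ℝ := fun t =>
  -(1/r) * (2 * Real.cosh (r*t) * (Real.sinh (r*t) * Real.log (Real.sinh (r*t)))
      - Real.sinh (2*r*t) * Real.log (Real.cosh (r*t))) + 2*t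

noncomputable def gfun (r : ℝ) : ℝ → ℝ := fun t =>
  -2 * Real.cosh (2*r*t) * (Real.log (Real.sinh (r*t)) - Real.log (Real.cosh (r*t)))

lemma Hfun_cont (r : ℝ) : Continuous (Hfun r) := by
  have h1 : Continuous fun t : ℝ => r * t := continuous_const.mul continuous_id
  have h2 : Continuous fun t : ℝ => 2 * r * t := continuous_const.mul continuous_id
  apply Continuous.add ?_ (continuous_const.mul continuous_id)
  apply Continuous.mul continuous_const
  apply Continuous.sub
  · exact (continuous_const.mul (Real.continuous_cosh.comp h1)).mul
      (Real.continuous_mul_log.comp (Real.continuous_sinh.comp h1))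
  · exact (Real.continuous_sinh.comp h2).mul
      ((Real.continuous_cosh.comp h1).log (fun x => (Real.cosh_pos (r*x)).ne'))

lemma Hfun_deriv (r : ℝ) (hr : 0 < r) (t : ℝ) (ht : 0 < t) :
    HasDerivAt (Hfun r) (gfun r t) t := by
  have hrt : 0 < r * t := mul_pos hr ht
  have hs : 0 < Real.sinh (r*t) := Real.sinh_pos_iff.mpr hrt
  have hc : 0 < Real.cosh (r*t) := Real.cosh_pos _
  have h1 : HasDerivAt (fun t : ℝ => r * t) r t := by
    simpa using (hasDerivAt_id t).const_mul r
  have h2 : HasDerivAt (fun t : ℝ => 2 * r * t) (2*r) t := by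
    simpa using (hasDerivAt_id t).const_mul (2*r)
  have hsinh : HasDerivAt (fun t : ℝ => Real.sinh (r*t)) (Real.cosh (r*t) * r) t :=
    (Real.hasDerivAt_sinh _).comp t h1
  have hcosh : HasDerivAt (fun t : ℝ => Real.cosh (r*t)) (Real.sinh (r*t) * r) t :=
    (Real.hasDerivAt_cosh _).comp t h1
  have hsinh2 : HasDerivAt (fun t : ℝ => Real.sinh (2*r*t)) (Real.cosh (2*r*t) * (2*r)) t :=
    (Real.hasDerivAt_sinh _).comp t h2
  have hml : HasDerivAt (fun t : ℝ => Real.sinh (r*t) * Real.log (Real.sinh (r*t)))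
      ((Real.log (Real.sinh (r*t)) + 1) * (Real.cosh (r*t) * r)) t :=
    by have := (Real.hasDerivAt_mul_log hs.ne').comp t hsinh; exact this
  have hlc : HasDerivAt (fun t : ℝ => Real.log (Real.cosh (r*t)))
      ((Real.cosh (r*t))⁻¹ * (Real.sinh (r*t) * r)) t :=
    by have := (Real.hasDerivAt_log hc.ne').comp t hcosh; exact this
  have hA := (hcosh.const_mul 2).mul hml
  have hB := hsinh2.mul hlc
  have h2t : HasDerivAt (fun x : ℝ => 2*x) (2:ℝ) t := by
    simpa using (hasDerivAt_id t).const_mul (2:ℝ)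
  have hAll := ((hA.sub hB).const_mul (-(1/r))).add h2t
  have heq : -(1/r) * (2 * (Real.sinh (r*t) * r) * (Real.sinh (r*t) * Real.log (Real.sinh (r*t)))
        + 2 * Real.cosh (r*t) * ((Real.log (Real.sinh (r*t)) + 1) * (Real.cosh (r*t) * r))
        - (Real.cosh (2*r*t) * (2*r) * Real.log (Real.cosh (r*t))
          + Real.sinh (2*r*t) * ((Real.cosh (r*t))⁻¹ * (Real.sinh (r*t) * r))))
        + 2 = gfun r t := by
    have e1 : Real.cosh (2*r*t) = Real.cosh (r*t)^2 + Real.sinh (r*t)^2 := by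
      rw [show 2*r*t = 2*(r*t) by ring, Real.cosh_two_mul]
    have e2 : Real.sinh (2*r*t) = 2 * Real.sinh (r*t) * Real.cosh (r*t) := by
      rw [show 2*r*t = 2*(r*t) by ring, Real.sinh_two_mul]
    have hc2 : Real.cosh (r*t)^2 = Real.sinh (r*t)^2 + 1 := Real.cosh_sq (r*t)
    rw [gfun, e1, e2]
    field_simp
    ring_nf
    linear_combination (-1) * hc2
  rw [← heq]
  exact hAll


theorem theta_of_optimizer_equals_beta (lam r : ℝ) (hlam : 0 < lam) (hr : 0 < r)
    (hrel : Real.sinh (2 * r) / (2 * r) = lam + 1) :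
    let M : ℝ → ℝ := fun t => -t + Real.sinh (2 * r * t) / (2 * r);
    -Real.log 2 + (∫ t in (0:ℝ)..1,
        ((deriv M t + 2) * Real.log (2 + deriv M t)
          - deriv M t * Real.log (deriv M t)
          - 2 * Real.log (t + M t))) =
      Real.log (2 * Real.exp 2 * r ^ 2 *
        Real.rpow (Real.tanh r) (-(2 * (lam + 1)))) := by
  intro M
  have hr2 : (0:ℝ) < 2 * r := by linarith
  -- derivative of M
  have hM : ∀ t : ℝ, deriv M t = Real.cosh (2 * r * t) - 1 := by
    intro t
    have h1 : HasDerivAt (fun t : ℝ => 2 * r * t) (2 * r) t := by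
      simpa using (hasDerivAt_id t).const_mul (2 * r)
    have h2 : HasDerivAt (fun t : ℝ => Real.sinh (2 * r * t)) (Real.cosh (2*r*t) * (2*r)) t :=
      (Real.hasDerivAt_sinh _).comp t h1
    have h3 : HasDerivAt M (-1 + Real.cosh (2*r*t) * (2*r) / (2*r)) t := by
      have := ((hasDerivAt_id t).neg.add (h2.div_const (2*r)))
      exact this
    rw [h3.deriv]
    field_simp
    ring
  -- pointwise identity on (0,1]
  have hpt : ∀ t ∈ Set.uIoc (0:ℝ) 1,
      ((deriv M t + 2) * Real.log (2 + deriv M t)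
        - deriv M t * Real.log (deriv M t) - 2 * Real.log (t + M t))
      = (2*Real.log 2 + 2*Real.log r) + gfun r t := by
    intro t htmem
    rw [Set.uIoc_of_le (by norm_num : (0:ℝ) ≤ 1)] at htmem
    have ht : 0 < t := htmem.1
    have hrt : 0 < r * t := mul_pos hr ht
    have hs : 0 < Real.sinh (r*t) := Real.sinh_pos_iff.mpr hrt
    have hc : 0 < Real.cosh (r*t) := Real.cosh_pos _
    have hc2 : Real.cosh (r*t)^2 = Real.sinh (r*t)^2 + 1 := Real.cosh_sq (r*t)
    have e1 : Real.cosh (2*r*t) = Real.cosh (r*t)^2 + Real.sinh (r*t)^2 := by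
      rw [show 2*r*t = 2*(r*t) by ring, Real.cosh_two_mul]
    have e2 : Real.sinh (2*r*t) = 2 * Real.sinh (r*t) * Real.cosh (r*t) := by
      rw [show 2*r*t = 2*(r*t) by ring, Real.sinh_two_mul]
    have etM : t + M t = Real.sinh (2*r*t) / (2*r) := by simp [M]
    rw [hM t, etM, e1, e2]
    have l1 : 2 + (Real.cosh (r*t)^2 + Real.sinh (r*t)^2 - 1) = 2 * Real.cosh (r*t)^2 := by
      linarith
    have l2 : Real.cosh (r*t)^2 + Real.sinh (r*t)^2 - 1 = 2 * Real.sinh (r*t)^2 := by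
      linarith
    rw [l1, l2]
    rw [Real.log_mul two_ne_zero (by positivity), Real.log_mul two_ne_zero (by positivity),
      Real.log_div (by positivity) hr2.ne', Real.log_mul (by positivity) hc.ne',
      Real.log_mul two_ne_zero hs.ne', Real.log_mul two_ne_zero hr.ne',
      Real.log_pow, Real.log_pow]
    simp only [gfun, e1]
    push_cast
    linear_combination (2*Real.log (Real.sinh (r*t)) - 2*Real.log (Real.cosh (r*t))) * hc2
  rw [intervalIntegral.integral_congr_ae (MeasureTheory.ae_of_all _ hpt)]
  -- integrability of gfun
  have hint : IntervalIntegrable (gfun r) volume 0 1 := by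
    apply intervalIntegral.intervalIntegrable_deriv_of_nonneg (g := Hfun r)
    · exact (Hfun_cont r).continuousOn
    · intro x hx
      norm_num at hx
      exact Hfun_deriv r hr x hx.1
    · intro x hx
      norm_num at hx
      have hrx : 0 < r * x := mul_pos hr hx.1
      have hs : 0 < Real.sinh (r*x) := Real.sinh_pos_iff.mpr hrx
      have hlog : Real.log (Real.sinh (r*x)) ≤ Real.log (Real.cosh (r*x)) :=
        Real.log_le_log hs (Real.sinh_lt_cosh _).le
      have hcc : 0 < Real.cosh (2*r*x) := Real.cosh_pos _
      simp only [gfun]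
      nlinarith
  -- FTC for gfun
  have hftc : ∫ t in (0:ℝ)..1, gfun r t = Hfun r 1 - Hfun r 0 :=
    intervalIntegral.integral_eq_sub_of_hasDeriv_right_of_le zero_le_one
      (Hfun_cont r).continuousOn
      (fun x hx => (Hfun_deriv r hr x hx.1).hasDerivWithinAt) hint
  have hH0 : Hfun r 0 = 0 := by simp [Hfun]
  have hs2r : Real.sinh (2*r) = 2*r*(lam+1) := by
    field_simp at hrel; linarith
  have hsr : 0 < Real.sinh r := Real.sinh_pos_iff.mpr hr
  have hcr : 0 < Real.cosh r := Real.cosh_pos _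
  have hH1 : Hfun r 1 = -(2*(lam+1)) * (Real.log (Real.sinh r) - Real.log (Real.cosh r)) + 2 := by
    have e2 : Real.sinh (2*r) = 2 * Real.sinh r * Real.cosh r := by
      rw [Real.sinh_two_mul]
    simp only [Hfun, mul_one]
    rw [e2] at hs2r ⊢
    field_simp
    linear_combination ((Real.log (Real.cosh r) - Real.log (Real.sinh r))/2) * hs2r
  rw [intervalIntegral.integral_add intervalIntegrable_const hint, hftc, hH0, hH1]
  simp only [intervalIntegral.integral_const, smul_eq_mul, sub_zero, one_smul]
  -- RHS
  have htanh : 0 < Real.tanh r := by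
    rw [Real.tanh_eq_sinh_div_cosh]; positivity
  have hlt : Real.log (Real.tanh r) = Real.log (Real.sinh r) - Real.log (Real.cosh r) := by
    rw [Real.tanh_eq_sinh_div_cosh, Real.log_div hsr.ne' hcr.ne']
  rw [show Real.rpow (Real.tanh r) (-(2 * (lam + 1))) = Real.tanh r ^ (-(2 * (lam + 1))) from rfl]
  rw [Real.log_mul (by positivity) (Real.rpow_pos_of_pos htanh _).ne',
    Real.log_mul (by positivity) (by positivity),
    Real.log_mul two_ne_zero (Real.exp_ne_zero _),
    Real.log_rpow htanh, Real.log_exp, Real.log_pow, hlt]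
  push_cast
  ring
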